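/- If subspaces K and L of H are both copyable along δ_e and K ⊓ L = ⊥, then K and L are orthogonal: for all x ∈ K and y ∈ L one has ⟪x, y⟫_ℂ = 0. (This is the Booleanness criterion used in the proof that the copyable kernels form a Boolean subalgebra.) -/

import Mathlib

open scoped TensorProduct InnerProductSpace

/-- The orthogonal projection of `H` onto the subspace `K`, regarded as an endomorphism
`P_K : H →ₗ[ℂ] H`. -/
noncomputable def projL {H : Type*} [NormedAddCommGroup H] [InnerProductSpace ℂ H]
    [FiniteDimensional ℂ H] (K : Submodule ℂ H) : H →ₗ[ℂ] H :=
  K.subtype ∘ₗ K.orthogonalProjectionOnto.toLinearMap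

/-- The classical structure `δ_e : H →ₗ[ℂ] H ⊗[ℂ] H` associated with an orthonormal basis
`e`, determined by `δ_e x = ∑ i, ⟪e i, x⟫_ℂ • (e i ⊗ₜ e i)`. -/
noncomputable def delta {ι H : Type*} [Fintype ι] [NormedAddCommGroup H]
    [InnerProductSpace ℂ H] (e : ι → H) : H →ₗ[ℂ] H ⊗[ℂ] H :=
  ∑ i, (innerSL ℂ (e i)).toLinearMap.smulRight (e i ⊗ₜ[ℂ] e i)

/-- A subspace `K` of `H` is copyable along `δ_e` if `δ_e ∘ₗ P_K = (P_K ⊗ P_K) ∘ₗ δ_e`. -/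
def Copyable {ι H : Type*} [Fintype ι] [NormedAddCommGroup H] [InnerProductSpace ℂ H]
    [FiniteDimensional ℂ H] (e : ι → H) (K : Submodule ℂ H) : Prop :=
  delta e ∘ₗ projL K = TensorProduct.map (projL K) (projL K) ∘ₗ delta e

section aux

set_option linter.unusedSectionVars false

variable {ι H : Type*} [Fintype ι] [NormedAddCommGroup H] [InnerProductSpace ℂ H]
    [FiniteDimensional ℂ H]

lemma projL_mem (K : Submodule ℂ H) (x : H) : projL K x ∈ K := by
  simp [projL]

lemma projL_of_mem (K : Submodule ℂ H) {x : H} (hx : x ∈ K) : projL K x = x := by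
  exact Submodule.starProjection_eq_self_iff.2 hx

lemma inner_projL (K : Submodule ℂ H) (x y : H) :
    ⟪projL K x, y⟫_ℂ = ⟪x, projL K y⟫_ℂ :=
  Submodule.inner_starProjection_left_eq_right K x y

lemma delta_apply (e : ι → H) (x : H) :
    delta e x = ∑ i, ⟪e i, x⟫_ℂ • (e i ⊗ₜ[ℂ] e i) := by
  simp [delta, LinearMap.sum_apply]

lemma key (e : OrthonormalBasis ι ℂ H) (K : Submodule ℂ H) (hK : Copyable (⇑e) K) (j : ι) :
    projL K (e j) = e j ∨ projL K (e j) = 0 := by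
  classical
  set P := projL K with hP
  set c : ι → ℂ := fun i => ⟪e i, P (e j)⟫_ℂ with hc
  have h0 : ∑ i, c i • (e i ⊗ₜ[ℂ] e i) = P (e j) ⊗ₜ[ℂ] P (e j) := by
    have h1 := LinearMap.congr_fun hK (e j)
    simp only [LinearMap.comp_apply] at h1
    rw [delta_apply, delta_apply] at h1
    simpa [orthonormal_iff_ite.1 e.orthonormal, Finset.sum_ite_eq, ite_smul] using h1
  have hcc : ∀ i k : ι, c i * c k = if i = k then c k else 0 := by
    intro i k
    have h2 := congrArg (LinearMap.mul' ℂ ℂ ∘ₗ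
      TensorProduct.map ((innerSL ℂ (e i)).toLinearMap) ((innerSL ℂ (e k)).toLinearMap)) h0
    simp only [LinearMap.comp_apply, map_sum, map_smul, TensorProduct.map_tmul,
      LinearMap.mul'_apply, ContinuousLinearMap.coe_coe, innerSL_apply_apply,
      orthonormal_iff_ite.1 e.orthonormal, smul_eq_mul, mul_ite, ite_mul,
      mul_one, mul_zero, one_mul, zero_mul, Finset.sum_ite_eq, Finset.mem_univ,
      if_true] at h2
    exact h2.symm
  by_cases hall : ∀ i, c i = 0
  · right
    have hs := e.sum_repr' (P (e j))
    rw [← hs]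
    exact Finset.sum_eq_zero fun i _ => by
      rw [show ⟪e i, P (e j)⟫_ℂ = c i from rfl, hall i, zero_smul]
  · left
    push_neg at hall
    obtain ⟨i, hi⟩ := hall
    have hci : c i = 1 := by
      have h3 := hcc i i
      rw [if_pos rfl] at h3
      exact mul_left_cancel₀ hi (by rw [h3, mul_one])
    have hck : ∀ k, k ≠ i → c k = 0 := by
      intro k hk
      have h4 := hcc i k
      rw [if_neg (Ne.symm hk)] at h4
      exact (mul_eq_zero.1 h4).resolve_left hi
    have hPej : P (e j) = e i := by
      have hs := e.sum_repr' (P (e j))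
      rw [← hs]
      have hcg : ∀ m ∈ Finset.univ, ⟪e m, P (e j)⟫_ℂ • e m
          = (if m = i then (1 : ℂ) else 0) • e m := by
        intro m _
        rcases eq_or_ne m i with rfl | h
        · rw [show ⟪e m, P (e j)⟫_ℂ = c m from rfl, hci, if_pos rfl]
        · rw [show ⟪e m, P (e j)⟫_ℂ = c m from rfl, hck m h, if_neg h]
      rw [Finset.sum_congr rfl hcg]
      simp [ite_smul]
    have hij : i = j := by
      have hmem : (e i : H) ∈ K := hPej ▸ projL_mem K (e j)
      have h5 : c i = ⟪e i, e j⟫_ℂ := by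
        have h6 := inner_projL K (e i) (e j)
        rw [projL_of_mem K hmem] at h6
        exact h6 ▸ rfl
      rw [hci, orthonormal_iff_ite.1 e.orthonormal] at h5
      by_contra h
      rw [if_neg h] at h5
      exact one_ne_zero h5
    rw [hPej, hij]

lemma projL_comp_zero (e : OrthonormalBasis ι ℂ H) (K L : Submodule ℂ H)
    (hK : Copyable (⇑e) K) (hL : Copyable (⇑e) L) (hKL : K ⊓ L = ⊥) (x : H) :
    projL K (projL L x) = 0 := by
  have hb : ∀ j, projL K (projL L (e j)) = 0 := by
    intro j
    rcases key e L hL j with hLj | hLj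
    · rcases key e K hK j with hKj | hKj
      · exfalso
        have hmemK : (e j : H) ∈ K := hKj ▸ projL_mem K (e j)
        have hmemL : (e j : H) ∈ L := hLj ▸ projL_mem L (e j)
        have : (e j : H) ∈ K ⊓ L := ⟨hmemK, hmemL⟩
        rw [hKL] at this
        have := e.orthonormal.ne_zero j
        simp_all
      · rw [hLj, hKj]
    · rw [hLj, map_zero]
  have hx := (e.toBasis.sum_repr x)
  calc projL K (projL L x) = projL K (projL L (∑ i, e.toBasis.repr x i • e.toBasis i)) := by
        rw [hx]
    _ = 0 := by
        rw [map_sum, map_sum]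
        refine Finset.sum_eq_zero fun i _ => ?_
        rw [map_smul, map_smul]
        rw [show e.toBasis i = e i from e.coe_toBasis ▸ rfl, hb i, smul_zero]

end aux

/-- If `K` and `L` are copyable along `δ_e` and `K ⊓ L = ⊥`, then `K` and `L` are
orthogonal: `⟪x, y⟫_ℂ = 0` for all `x ∈ K` and `y ∈ L`. -/
theorem copyable_disjoint_orthogonal
    {ι H : Type*} [Fintype ι] [NormedAddCommGroup H] [InnerProductSpace ℂ H]
    [FiniteDimensional ℂ H] (e : OrthonormalBasis ι ℂ H) (K L : Submodule ℂ H)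
    (hK : Copyable (⇑e) K) (hL : Copyable (⇑e) L) (hKL : K ⊓ L = ⊥) :
    ∀ x ∈ K, ∀ y ∈ L, ⟪x, y⟫_ℂ = 0 := by
  intro x hx y hy
  have h1 : ⟪x, y⟫_ℂ = ⟪projL K x, projL L y⟫_ℂ := by
    rw [projL_of_mem K hx, projL_of_mem L hy]
  rw [h1, inner_projL K x (projL L y), projL_comp_zero e K L hK hL hKL y, inner_zero_right]
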